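/- With a = -2c and b = 0 (and c ≠ 0), the characteristic polynomial of the Jacobian of the Lorenz–Haken system at the equilibrium p = (0,0,0,Δ), Δ = (ec - c² - d²)/c, equals λ⁴ + (a + 2c)λ³ + (c² + d² + a(c - d²/c))λ², which simplifies to λ²(λ² + 3d² - c²). In particular, if 3d² - c² > 0, the eigenvalues are 0, 0, ±i√(3d² - c²), so p is a zero-Hopf equilibrium. -/

import Mathlib

open Polynomial

/-- With `a = -2c`, `b = 0`, `c ≠ 0`, the characteristic polynomial of the Jacobian of the
Lorenz–Haken system at `p = (0,0,0,Δ)` equals `λ²(λ² + 3d² - c²)`; in particular, if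
`3d² - c² > 0` the eigenvalues are `0, 0, ±i√(3d² - c²)`, so `p` is a zero-Hopf
equilibrium. -/
theorem lorenz_haken_charpoly_p (c d : ℝ) (hc : c ≠ 0) :
    (Matrix.charpoly
        (!![2 * c, -2 * c, 0, 0; c + d ^ 2 / c, -c, -d, 0; 0, d, -c, 0; 0, 0, 0, 0] :
          Matrix (Fin 4) (Fin 4) ℝ)) =
      X ^ 2 * (X ^ 2 + C (3 * d ^ 2 - c ^ 2)) ∧
    (3 * d ^ 2 - c ^ 2 > 0 →
      aeval ((0 : ℂ))
          (Matrix.charpoly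
            (!![2 * c, -2 * c, 0, 0; c + d ^ 2 / c, -c, -d, 0; 0, d, -c, 0; 0, 0, 0, 0] :
              Matrix (Fin 4) (Fin 4) ℝ)) = 0 ∧
      aeval (Complex.I * (Real.sqrt (3 * d ^ 2 - c ^ 2) : ℂ))
          (Matrix.charpoly
            (!![2 * c, -2 * c, 0, 0; c + d ^ 2 / c, -c, -d, 0; 0, d, -c, 0; 0, 0, 0, 0] :
              Matrix (Fin 4) (Fin 4) ℝ)) = 0 ∧
      aeval (-(Complex.I * (Real.sqrt (3 * d ^ 2 - c ^ 2) : ℂ)))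
          (Matrix.charpoly
            (!![2 * c, -2 * c, 0, 0; c + d ^ 2 / c, -c, -d, 0; 0, d, -c, 0; 0, 0, 0, 0] :
              Matrix (Fin 4) (Fin 4) ℝ)) = 0) := by
  have hchar :
      (Matrix.charpoly
          (!![2 * c, -2 * c, 0, 0; c + d ^ 2 / c, -c, -d, 0; 0, d, -c, 0; 0, 0, 0, 0] :
            Matrix (Fin 4) (Fin 4) ℝ)) =
        X ^ 2 * (X ^ 2 + C (3 * d ^ 2 - c ^ 2)) := by
    rw [Matrix.charpoly]
    simp [Matrix.det_succ_row_zero, Fin.sum_univ_succ, Matrix.charmatrix_apply,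
      Matrix.diagonal_apply, Fin.succAbove]
    have e2 : (C c : ℝ[X]) * C (d ^ 2 * c⁻¹) = C (d ^ 2) := by
      rw [← C_mul]; congr 1; field_simp
    ring_nf
    simp only [map_ofNat, ← C_pow]
    have e5 : (C (c ^ 2) : ℝ[X]) = C c ^ 2 := by rw [C_pow]
    linear_combination (X * 2 * C c + X ^ 2 * 2) * e2 + (X * C (d ^ 2 * c⁻¹) * 2) * e5
  refine ⟨hchar, fun hpos => ?_⟩
  have hsq : ((Real.sqrt (3 * d ^ 2 - c ^ 2) : ℂ)) ^ 2 = ((3 * d ^ 2 - c ^ 2 : ℝ) : ℂ) := by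
    rw [← Complex.ofReal_pow, Real.sq_sqrt hpos.le]
  refine ⟨?_, ?_, ?_⟩ <;>
    simp only [hchar, map_mul, map_add, map_pow, aeval_X, aeval_C, Complex.coe_algebraMap] <;>
    [skip;
     rw [show (Complex.I * (Real.sqrt (3 * d ^ 2 - c ^ 2) : ℂ)) ^ 2 =
        -((Real.sqrt (3 * d ^ 2 - c ^ 2) : ℂ)) ^ 2 by
          rw [mul_pow, Complex.I_sq]; ring];
     rw [show (-(Complex.I * (Real.sqrt (3 * d ^ 2 - c ^ 2) : ℂ))) ^ 2 =
        -((Real.sqrt (3 * d ^ 2 - c ^ 2) : ℂ)) ^ 2 by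
          rw [neg_pow, mul_pow, Complex.I_sq]; ring]] <;>
    simp [hsq]
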